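/- arXiv:1802.05024 — 2 statements merged into one kernel-verified Lean document; each statement's English description precedes it below -/
import Mathlib

section
/- Let q ≥ 1 and L > 4q be natural numbers with gcd(L, 30q) = 1 and such that neither 3 nor 5 divides L − 4q. Let Γ be a subgroup of SL(2,ℤ) containing the three matrices T^L, T'^{15}, and T''^{2(L−4q)}, where T'' = T'·T·T'⁻¹. Then for every n ≥ 1 the canonical projection SL(2,ℤ) → SL(2,ℤ/nℤ) maps Γ onto all of SL(2,ℤ/nℤ), i.e. Γ is a totally non congruence group. -/
open Matrix MatrixGroups

namespace TNCAux

variable {R : Type*} [CommRing R] {S : Type*} [CommRing S]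

def tg (R : Type*) [CommRing R] : SL(2, R) :=
  ⟨!![1, 1; 0, 1], by norm_num [Matrix.det_fin_two_of]⟩

def tg' (R : Type*) [CommRing R] : SL(2, R) :=
  ⟨!![1, 0; 1, 1], by norm_num [Matrix.det_fin_two_of]⟩

def sg (R : Type*) [CommRing R] : SL(2, R) :=
  ⟨!![0, -1; 1, 0], by norm_num [Matrix.det_fin_two_of]⟩

lemma coe_tg : ((tg R : SL(2, R)) : Matrix (Fin 2) (Fin 2) R) = !![1, 1; 0, 1] := rfl
lemma coe_tg' : ((tg' R : SL(2, R)) : Matrix (Fin 2) (Fin 2) R) = !![1, 0; 1, 1] := rfl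
lemma coe_sg : ((sg R : SL(2, R)) : Matrix (Fin 2) (Fin 2) R) = !![0, -1; 1, 0] := rfl

lemma coe_tg_inv : (((tg R)⁻¹ : SL(2, R)) : Matrix (Fin 2) (Fin 2) R) = !![1, -1; 0, 1] := by
  rw [Matrix.SpecialLinearGroup.coe_inv, coe_tg, Matrix.adjugate_fin_two]
  norm_num

lemma coe_tg'_inv : (((tg' R)⁻¹ : SL(2, R)) : Matrix (Fin 2) (Fin 2) R) = !![1, 0; -1, 1] := by
  rw [Matrix.SpecialLinearGroup.coe_inv, coe_tg', Matrix.adjugate_fin_two]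
  norm_num

lemma tg_pow_coe (k : ℕ) : ((tg R ^ k : SL(2, R)) : Matrix (Fin 2) (Fin 2) R)
    = !![1, (k : R); 0, 1] := by
  induction k with
  | zero => simp [Matrix.SpecialLinearGroup.coe_one, Matrix.one_fin_two]
  | succ k ih =>
      rw [pow_succ, Matrix.SpecialLinearGroup.coe_mul, ih, coe_tg, Matrix.mul_fin_two]
      ext i j
      fin_cases i <;> fin_cases j <;> simp <;> push_cast <;> ring

lemma tg'_pow_coe (k : ℕ) : ((tg' R ^ k : SL(2, R)) : Matrix (Fin 2) (Fin 2) R)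
    = !![1, 0; (k : R), 1] := by
  induction k with
  | zero => simp [Matrix.SpecialLinearGroup.coe_one, Matrix.one_fin_two]
  | succ k ih =>
      rw [pow_succ, Matrix.SpecialLinearGroup.coe_mul, ih, coe_tg', Matrix.mul_fin_two]
      ext i j
      fin_cases i <;> fin_cases j <;> simp <;> push_cast <;> ring

lemma tg_zpow_coe (z : ℤ) : ((tg R ^ z : SL(2, R)) : Matrix (Fin 2) (Fin 2) R)
    = !![1, (z : R); 0, 1] := by
  cases z with
  | ofNat k => rw [Int.ofNat_eq_coe, zpow_natCast, tg_pow_coe]; norm_num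
  | negSucc k =>
      rw [zpow_negSucc, Matrix.SpecialLinearGroup.coe_inv, tg_pow_coe,
        Matrix.adjugate_fin_two]
      norm_num [Int.cast_negSucc]

lemma map_tg (f : R →+* S) : Matrix.SpecialLinearGroup.map f (tg R) = tg S := by
  apply Subtype.ext
  rw [Matrix.SpecialLinearGroup.map_apply_coe, RingHom.mapMatrix_apply, coe_tg, coe_tg]
  ext i j
  fin_cases i <;> fin_cases j <;> simp

lemma map_tg' (f : R →+* S) : Matrix.SpecialLinearGroup.map f (tg' R) = tg' S := by
  apply Subtype.ext
  rw [Matrix.SpecialLinearGroup.map_apply_coe, RingHom.mapMatrix_apply, coe_tg', coe_tg']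
  ext i j
  fin_cases i <;> fin_cases j <;> simp

/-- `T * S * T = T'`. -/
lemma tg_sg_tg : tg R * sg R * tg R = tg' R := by
  apply Subtype.ext
  simp only [Matrix.SpecialLinearGroup.coe_mul, coe_tg, coe_sg, coe_tg', Matrix.mul_fin_two]
  ext i j
  fin_cases i <;> fin_cases j <;> simp

/-- `T⁻¹ * (T' * T * T'⁻¹) * T = T'⁻¹`. -/
lemma tg_conj_id : (tg R)⁻¹ * (tg' R * tg R * (tg' R)⁻¹) * tg R = (tg' R)⁻¹ := by
  apply Subtype.ext
  simp only [Matrix.SpecialLinearGroup.coe_mul, coe_tg, coe_tg', coe_tg_inv, coe_tg'_inv,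
    Matrix.mul_fin_two]
  ext i j
  fin_cases i <;> fin_cases j <;> simp

end TNCAux
namespace TNCAux
variable {R : Type*} [CommRing R]



section Gen
variable {N : ℕ} [NeZero N]

local notation "C" => Subgroup.closure {tg (ZMod N), tg' (ZMod N)}

omit [NeZero N] in
lemma pow_tg_congr {s t : ℕ} (h : (s : ZMod N) = (t : ZMod N)) :
    tg (ZMod N) ^ s = tg (ZMod N) ^ t := by
  apply Subtype.ext
  rw [tg_pow_coe, tg_pow_coe, h]

omit [NeZero N] in
lemma pow_tg'_congr {s t : ℕ} (h : (s : ZMod N) = (t : ZMod N)) :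
    tg' (ZMod N) ^ s = tg' (ZMod N) ^ t := by
  apply Subtype.ext
  rw [tg'_pow_coe, tg'_pow_coe, h]

lemma eel_mem (x : ZMod N) (hd : Matrix.det !![1, x; 0, 1] = 1) :
    (⟨!![1, x; 0, 1], hd⟩ : SL(2, ZMod N)) ∈ C := by
  have : (⟨!![1, x; 0, 1], hd⟩ : SL(2, ZMod N)) = tg (ZMod N) ^ x.val := by
    apply Subtype.ext
    rw [tg_pow_coe, ZMod.natCast_val, ZMod.cast_id]
  rw [this]
  exact pow_mem (Subgroup.subset_closure (by simp)) _

lemma fel_mem (y : ZMod N) (hd : Matrix.det !![1, 0; y, 1] = 1) :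
    (⟨!![1, 0; y, 1], hd⟩ : SL(2, ZMod N)) ∈ C := by
  have : (⟨!![1, 0; y, 1], hd⟩ : SL(2, ZMod N)) = tg' (ZMod N) ^ y.val := by
    apply Subtype.ext
    rw [tg'_pow_coe, ZMod.natCast_val, ZMod.cast_id]
  rw [this]
  exact pow_mem (Subgroup.subset_closure (by simp)) _

omit [NeZero N] in
lemma sg_mem : sg (ZMod N) ∈ C := by
  have h : sg (ZMod N) = (tg (ZMod N))⁻¹ * tg' (ZMod N) * (tg (ZMod N))⁻¹ := by
    have := tg_sg_tg (R := ZMod N)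
    group
    rw [← this]
    group
  rw [h]
  have h1 : tg (ZMod N) ∈ C := Subgroup.subset_closure (by simp)
  have h2 : tg' (ZMod N) ∈ C := Subgroup.subset_closure (by simp)
  exact mul_mem (mul_mem (inv_mem h1) h2) (inv_mem h1)

lemma upper_mem (A : SL(2, ZMod N)) (h0 : (A : Matrix (Fin 2) (Fin 2) (ZMod N)) 1 0 = 0) :
    A ∈ C := by
  obtain ⟨u, b, d, hA⟩ : ∃ u b d, (A : Matrix (Fin 2) (Fin 2) (ZMod N)) = !![u, b; 0, d] :=
    ⟨_, _, _, by rw [Matrix.eta_fin_two (A : Matrix (Fin 2) (Fin 2) (ZMod N)), h0]⟩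
  have hud : u * d = 1 := by
    have h := A.det_coe
    rw [hA] at h
    rw [Matrix.det_fin_two_of] at h
    simpa using h
  have e1 : Matrix.det !![1, u; 0, 1] = 1 := by norm_num [Matrix.det_fin_two_of]
  have e2 : Matrix.det !![1, 0; -d, 1] = 1 := by norm_num [Matrix.det_fin_two_of]
  have e3 : Matrix.det !![1, d * b; 0, 1] = 1 := by norm_num [Matrix.det_fin_two_of]
  have key : A = ⟨!![1, u; 0, 1], e1⟩ * ⟨!![1, 0; -d, 1], e2⟩ * ⟨!![1, u; 0, 1], e1⟩ *
      sg (ZMod N) * ⟨!![1, d * b; 0, 1], e3⟩ := by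
    apply Subtype.ext
    erw [Matrix.SpecialLinearGroup.coe_mul, Matrix.SpecialLinearGroup.coe_mul,
      Matrix.SpecialLinearGroup.coe_mul, Matrix.SpecialLinearGroup.coe_mul]
    simp only [Matrix.SpecialLinearGroup.coe_mk, coe_sg, Matrix.mul_fin_two]
    rw [hA]
    ext i j
    fin_cases i <;> fin_cases j <;> simp
    · linear_combination (-u) * hud
    · linear_combination (b * (u * d - 1) - 1) * hud
    · linear_combination hud
    · linear_combination (-(d * b)) * hud
  rw [key]
  exact mul_mem (mul_mem (mul_mem (mul_mem (eel_mem u e1) (fel_mem (-d) e2)) (eel_mem u e1))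
    sg_mem) (eel_mem _ e3)

end Gen
section Gen2
variable {N : ℕ} [NeZero N]

local notation "C" => Subgroup.closure {tg (ZMod N), tg' (ZMod N)}

lemma reduce_mem : ∀ (m : ℕ) (A : SL(2, ZMod N)) (c : ℤ),
    ((c : ℤ) : ZMod N) = (A : Matrix (Fin 2) (Fin 2) (ZMod N)) 1 0 → c.natAbs ≤ m → A ∈ C := by
  intro m
  induction m with
  | zero =>
      intro A c hc hle
      have hc0 : c = 0 := by omega
      apply upper_mem
      rw [← hc, hc0]
      simp
  | succ m ih =>
      intro A c hc hle
      by_cases h0 : (A : Matrix (Fin 2) (Fin 2) (ZMod N)) 1 0 = 0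
      · exact upper_mem A h0
      · have hcne : c ≠ 0 := by
          rintro rfl
          exact h0 (by simpa using hc.symm)
        set a : ℤ := (((A : Matrix (Fin 2) (Fin 2) (ZMod N)) 0 0).val : ℤ) with ha_def
        have ha : ((a : ℤ) : ZMod N) = (A : Matrix (Fin 2) (Fin 2) (ZMod N)) 0 0 := by
          rw [ha_def]
          push_cast
          rw [ZMod.natCast_val, ZMod.cast_id]
        set B : SL(2, ZMod N) := sg (ZMod N) * (tg (ZMod N) ^ (-(a / c)) * A) with hB_def
        have hB10 : (((a % c : ℤ)) : ZMod N) = (B : Matrix (Fin 2) (Fin 2) (ZMod N)) 1 0 := by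
          have hmat : (B : Matrix (Fin 2) (Fin 2) (ZMod N)) =
              !![0, -1; 1, 0] * (!![1, ((-(a / c) : ℤ) : ZMod N); 0, 1] *
                (A : Matrix (Fin 2) (Fin 2) (ZMod N))) := by
            rw [hB_def, Matrix.SpecialLinearGroup.coe_mul, Matrix.SpecialLinearGroup.coe_mul,
              coe_sg, tg_zpow_coe]
          rw [hmat]
          rw [Matrix.eta_fin_two (A : Matrix (Fin 2) (Fin 2) (ZMod N))]
          rw [Matrix.mul_fin_two, Matrix.mul_fin_two]
          simp only [Matrix.cons_val', Matrix.cons_val_zero, Matrix.cons_val_one,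
            Matrix.head_cons, Matrix.head_fin_const, Matrix.empty_val',
            Matrix.cons_val_fin_one, Matrix.of_apply]
          rw [← ha, ← hc]
          push_cast [Int.emod_def]
          ring
        have hdec : (a % c).natAbs ≤ m := by
          have h1 : 0 ≤ a % c := Int.emod_nonneg a hcne
          have h2 : a % c < |c| := by rw [Int.abs_eq_natAbs]; exact Int.emod_lt a hcne
          rw [Int.abs_eq_natAbs] at h2
          omega
        have hBmem : B ∈ C := ih B (a % c) hB10 hdec
        have hA : A = (tg (ZMod N) ^ (-(a / c)))⁻¹ * ((sg (ZMod N))⁻¹ * B) := by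
          rw [hB_def]
          group
        rw [hA]
        exact mul_mem (inv_mem (zpow_mem (Subgroup.subset_closure (by simp)) _))
          (mul_mem (inv_mem sg_mem) hBmem)

theorem closure_tg_tg' : Subgroup.closure {tg (ZMod N), tg' (ZMod N)} = ⊤ := by
  rw [eq_top_iff]
  intro A _
  refine reduce_mem (((A : Matrix (Fin 2) (Fin 2) (ZMod N)) 1 0).val : ℤ).natAbs A
    (((A : Matrix (Fin 2) (Fin 2) (ZMod N)) 1 0).val : ℤ) ?_ le_rfl
  push_cast
  rw [ZMod.natCast_val, ZMod.cast_id]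

end Gen2
section Tsec
variable {R : Type*} [CommRing R] {S : Type*} [CommRing S]

/-- `T'' = T' T T'⁻¹` -/
def tsec (R : Type*) [CommRing R] : SL(2, R) := tg' R * tg R * (tg' R)⁻¹

lemma tsec_pow (s : ℕ) : tsec R ^ s = tg' R * tg R ^ s * (tg' R)⁻¹ := conj_pow

lemma map_tsec (f : R →+* S) : Matrix.SpecialLinearGroup.map f (tsec R) = tsec S := by
  rw [tsec, MonoidHom.map_mul, MonoidHom.map_mul, MonoidHom.map_inv, map_tg, map_tg']
  rfl

end Tsec

section ModN
variable {n : ℕ}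

lemma pow_tsec_congr {s t : ℕ} (h : (s : ZMod n) = (t : ZMod n)) :
    tsec (ZMod n) ^ s = tsec (ZMod n) ^ t := by
  rw [tsec_pow, tsec_pow, pow_tg_congr h]

lemma tg_pow_eq_one {w : ℕ} (h : n ∣ w) : tg (ZMod n) ^ w = 1 := by
  have : ((w : ℕ) : ZMod n) = ((0 : ℕ) : ZMod n) := by
    simpa using (ZMod.natCast_eq_zero_iff w n).mpr h
  rw [pow_tg_congr this, pow_zero]

lemma tg'_pow_eq_one {w : ℕ} (h : n ∣ w) : tg' (ZMod n) ^ w = 1 := by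
  have : ((w : ℕ) : ZMod n) = ((0 : ℕ) : ZMod n) := by
    simpa using (ZMod.natCast_eq_zero_iff w n).mpr h
  rw [pow_tg'_congr this, pow_zero]

lemma tsec_pow_eq_one {w : ℕ} (h : n ∣ w) : tsec (ZMod n) ^ w = 1 := by
  rw [tsec_pow, tg_pow_eq_one h, mul_one, mul_inv_cancel]

lemma exists_pow_index [NeZero n] {a : ℕ} (h : a.Coprime n) (s : ℕ) :
    ∃ x : ℕ, ((a * x : ℕ) : ZMod n) = ((s : ℕ) : ZMod n) := by
  set un := ZMod.unitOfCoprime a h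
  refine ⟨((((un⁻¹ : (ZMod n)ˣ) : ZMod n)) * (s : ZMod n)).val, ?_⟩
  push_cast
  rw [ZMod.natCast_val, ZMod.cast_id]
  rw [← mul_assoc]
  have : (a : ZMod n) * ((un⁻¹ : (ZMod n)ˣ) : ZMod n) = 1 := by
    have ha : (a : ZMod n) = (un : ZMod n) := (ZMod.coe_unitOfCoprime a h).symm
    rw [ha, ← Units.val_mul, mul_inv_cancel, Units.val_one]
  rw [this, one_mul]

end ModN

section PP

lemma pp_case {n : ℕ} [NeZero n] {p : ℕ} (hp : p.Prime) {k : ℕ} (hn : n = p ^ k)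
    (a b c : ℕ) (hab : ¬(p ∣ a ∧ p ∣ b)) (hac : ¬(p ∣ a ∧ p ∣ c)) (hbc : ¬(p ∣ b ∧ p ∣ c))
    (H : Subgroup (SL(2, ZMod n)))
    (fa : ∀ x : ℕ, tg (ZMod n) ^ (a * x) ∈ H)
    (fb : ∀ y : ℕ, tg' (ZMod n) ^ (b * y) ∈ H)
    (fc : ∀ z : ℕ, tsec (ZMod n) ^ (c * z) ∈ H) : H = ⊤ := by
  have hcop : ∀ e : ℕ, ¬ p ∣ e → e.Coprime n := by
    intro e he
    rw [hn]
    exact Nat.Coprime.pow_right _ ((hp.coprime_iff_not_dvd.mpr he).symm)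
  have getT : ¬ p ∣ a → tg (ZMod n) ∈ H := by
    intro h
    obtain ⟨x, hx⟩ := exists_pow_index (hcop a h) 1
    have := fa x
    rwa [pow_tg_congr hx, pow_one] at this
  have getT' : ¬ p ∣ b → tg' (ZMod n) ∈ H := by
    intro h
    obtain ⟨y, hy⟩ := exists_pow_index (hcop b h) 1
    have := fb y
    rwa [pow_tg'_congr hy, pow_one] at this
  have getTsec : ¬ p ∣ c → tsec (ZMod n) ∈ H := by
    intro h
    obtain ⟨z, hz⟩ := exists_pow_index (hcop c h) 1
    have := fc z
    rwa [pow_tsec_congr hz, pow_one] at this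
  have hTT' : tg (ZMod n) ∈ H ∧ tg' (ZMod n) ∈ H := by
    by_cases hpa : p ∣ a
    · have hb : ¬ p ∣ b := fun h => hab ⟨hpa, h⟩
      have hc : ¬ p ∣ c := fun h => hac ⟨hpa, h⟩
      have h1 := getT' hb
      have h2 := getTsec hc
      have hTg : tg (ZMod n) = (tg' (ZMod n))⁻¹ * tsec (ZMod n) * tg' (ZMod n) := by
        rw [tsec]; group
      exact ⟨hTg ▸ mul_mem (mul_mem (inv_mem h1) h2) h1, h1⟩
    · by_cases hpb : p ∣ b
      · have hc : ¬ p ∣ c := fun h => hbc ⟨hpb, h⟩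
        have h1 := getT hpa
        have h2 := getTsec hc
        have hTg' : tg' (ZMod n) =
            ((tg (ZMod n))⁻¹ * tsec (ZMod n) * tg (ZMod n))⁻¹ := by
          rw [tsec, tg_conj_id, inv_inv]
        exact ⟨h1, hTg' ▸ inv_mem (mul_mem (mul_mem (inv_mem h1) h2) h1)⟩
      · exact ⟨getT hpa, getT' hpb⟩
  rw [eq_top_iff, ← closure_tg_tg']
  rw [Subgroup.closure_le]
  intro x hx
  rcases hx with h | h
  · exact h ▸ hTT'.1
  · simp only [Set.mem_singleton_iff] at h
    exact h ▸ hTT'.2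

end PP
section CRT

variable {n u v : ℕ}

lemma inj0 (hn : u * v = n) (cop : u.Coprime v) (hu0 : u ≠ 0) (hv0 : v ≠ 0)
    (hdu : u ∣ n) (hdv : v ∣ n) (x : ZMod n)
    (hxu : ZMod.castHom hdu (ZMod u) x = 0) (hxv : ZMod.castHom hdv (ZMod v) x = 0) :
    x = 0 := by
  subst hn
  haveI : NeZero u := ⟨hu0⟩
  haveI : NeZero v := ⟨hv0⟩
  haveI : NeZero (u * v) := ⟨mul_ne_zero hu0 hv0⟩
  have h1 : (x.val : ZMod u) = 0 := by
    rw [ZMod.natCast_val x, ← ZMod.castHom_apply (h := hdu), hxu]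
  have h2 : (x.val : ZMod v) = 0 := by
    rw [ZMod.natCast_val x, ← ZMod.castHom_apply (h := hdv), hxv]
  have d1 : u ∣ x.val := (ZMod.natCast_eq_zero_iff _ _).mp h1
  have d2 : v ∣ x.val := (ZMod.natCast_eq_zero_iff _ _).mp h2
  have d : u * v ∣ x.val := cop.mul_dvd_of_dvd_of_dvd d1 d2
  have hv : x.val = 0 := Nat.eq_zero_of_dvd_of_lt d (ZMod.val_lt x)
  rwa [ZMod.val_eq_zero] at hv

lemma inj_pair (hn : u * v = n) (cop : u.Coprime v) (hu0 : u ≠ 0) (hv0 : v ≠ 0)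
    (hdu : u ∣ n) (hdv : v ∣ n) (x y : ZMod n)
    (h1 : ZMod.castHom hdu (ZMod u) x = ZMod.castHom hdu (ZMod u) y)
    (h2 : ZMod.castHom hdv (ZMod v) x = ZMod.castHom hdv (ZMod v) y) : x = y := by
  have := inj0 hn cop hu0 hv0 hdu hdv (x - y) (by rw [map_sub, h1, sub_self])
    (by rw [map_sub, h2, sub_self])
  exact sub_eq_zero.mp this

lemma inj_SL (hn : u * v = n) (cop : u.Coprime v) (hu0 : u ≠ 0) (hv0 : v ≠ 0)
    (hdu : u ∣ n) (hdv : v ∣ n) (A B : SL(2, ZMod n))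
    (h1 : Matrix.SpecialLinearGroup.map (ZMod.castHom hdu (ZMod u)) A =
      Matrix.SpecialLinearGroup.map (ZMod.castHom hdu (ZMod u)) B)
    (h2 : Matrix.SpecialLinearGroup.map (ZMod.castHom hdv (ZMod v)) A =
      Matrix.SpecialLinearGroup.map (ZMod.castHom hdv (ZMod v)) B) : A = B := by
  have e1 : ∀ i j, ZMod.castHom hdu (ZMod u) ((A : Matrix (Fin 2) (Fin 2) (ZMod n)) i j) =
      ZMod.castHom hdu (ZMod u) ((B : Matrix (Fin 2) (Fin 2) (ZMod n)) i j) := by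
    intro i j
    have := congrArg (fun M : SL(2, ZMod u) => (M : Matrix (Fin 2) (Fin 2) (ZMod u)) i j) h1
    simpa [Matrix.SpecialLinearGroup.map_apply_coe, RingHom.mapMatrix_apply,
      Matrix.map_apply] using this
  have e2 : ∀ i j, ZMod.castHom hdv (ZMod v) ((A : Matrix (Fin 2) (Fin 2) (ZMod n)) i j) =
      ZMod.castHom hdv (ZMod v) ((B : Matrix (Fin 2) (Fin 2) (ZMod n)) i j) := by
    intro i j
    have := congrArg (fun M : SL(2, ZMod v) => (M : Matrix (Fin 2) (Fin 2) (ZMod v)) i j) h2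
    simpa [Matrix.SpecialLinearGroup.map_apply_coe, RingHom.mapMatrix_apply,
      Matrix.map_apply] using this
  apply Subtype.ext
  ext i j
  exact inj_pair hn cop hu0 hv0 hdu hdv _ _ (e1 i j) (e2 i j)

lemma pair_lift (hn : u * v = n) (cop : u.Coprime v) (hu0 : u ≠ 0) (hv0 : v ≠ 0)
    (hdu : u ∣ n) (hdv : v ∣ n) (r : ZMod u) (s : ZMod v) :
    ∃ x : ZMod n, ZMod.castHom hdu (ZMod u) x = r ∧ ZMod.castHom hdv (ZMod v) x = s := by
  haveI : NeZero u := ⟨hu0⟩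
  haveI : NeZero v := ⟨hv0⟩
  obtain ⟨w, hw1, hw2⟩ := Nat.chineseRemainder cop r.val s.val
  refine ⟨((w : ℕ) : ZMod n), ?_, ?_⟩
  · rw [map_natCast]
    rw [(ZMod.natCast_eq_natCast_iff _ _ _).mpr hw1]
    rw [ZMod.natCast_val, ZMod.cast_id]
  · rw [map_natCast]
    rw [(ZMod.natCast_eq_natCast_iff _ _ _).mpr hw2]
    rw [ZMod.natCast_val, ZMod.cast_id]

lemma crt_lift (hn : u * v = n) (cop : u.Coprime v) (hu0 : u ≠ 0) (hv0 : v ≠ 0)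
    (hdu : u ∣ n) (hdv : v ∣ n) (A : SL(2, ZMod n)) :
    ∃ B : SL(2, ZMod n),
      Matrix.SpecialLinearGroup.map (ZMod.castHom hdu (ZMod u)) B =
        Matrix.SpecialLinearGroup.map (ZMod.castHom hdu (ZMod u)) A ∧
      Matrix.SpecialLinearGroup.map (ZMod.castHom hdv (ZMod v)) B = 1 := by
  have hchoice : ∀ i j : Fin 2, ∃ x : ZMod n,
      ZMod.castHom hdu (ZMod u) x = ZMod.castHom hdu (ZMod u)
        ((A : Matrix (Fin 2) (Fin 2) (ZMod n)) i j) ∧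
      ZMod.castHom hdv (ZMod v) x = (1 : Matrix (Fin 2) (Fin 2) (ZMod v)) i j :=
    fun i j => pair_lift hn cop hu0 hv0 hdu hdv _ _
  choose M hMu hMv using hchoice
  have hmapu : (Matrix.of M).map (ZMod.castHom hdu (ZMod u)) =
      (A : Matrix (Fin 2) (Fin 2) (ZMod n)).map (ZMod.castHom hdu (ZMod u)) := by
    ext i j
    simpa [Matrix.map_apply] using hMu i j
  have hmapv : (Matrix.of M).map (ZMod.castHom hdv (ZMod v)) =
      (1 : Matrix (Fin 2) (Fin 2) (ZMod v)) := by
    ext i j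
    simpa [Matrix.map_apply] using hMv i j
  have hdet : (Matrix.of M).det = 1 := by
    apply inj_pair hn cop hu0 hv0 hdu hdv
    · rw [RingHom.map_det, RingHom.mapMatrix_apply, hmapu, ← RingHom.mapMatrix_apply,
        ← RingHom.map_det, A.det_coe]
    · rw [RingHom.map_det, RingHom.mapMatrix_apply, hmapv, Matrix.det_one, _root_.map_one]
  refine ⟨⟨Matrix.of M, hdet⟩, ?_, ?_⟩
  · apply Subtype.ext
    erw [Matrix.SpecialLinearGroup.map_apply_coe, Matrix.SpecialLinearGroup.map_apply_coe]
    simpa [RingHom.mapMatrix_apply] using hmapu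
  · apply Subtype.ext
    erw [Matrix.SpecialLinearGroup.map_apply_coe]
    simpa [RingHom.mapMatrix_apply] using hmapv

end CRT
section Main

lemma ker_le {n u v : ℕ} (hn : u * v = n) (cop : u.Coprime v) (hu : 1 < u) (hv : 1 < v)
    (hdu : u ∣ n) (hdv : v ∣ n)
    (a b c : ℕ) (H : Subgroup (SL(2, ZMod n)))
    (fa : ∀ x : ℕ, tg (ZMod n) ^ (a * x) ∈ H)
    (fb : ∀ y : ℕ, tg' (ZMod n) ^ (b * y) ∈ H)
    (fc : ∀ z : ℕ, tsec (ZMod n) ^ (c * z) ∈ H)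
    (ihu : ∀ H' : Subgroup (SL(2, ZMod u)),
      (∀ x : ℕ, tg (ZMod u) ^ (a * v * x) ∈ H') →
      (∀ y : ℕ, tg' (ZMod u) ^ (b * v * y) ∈ H') →
      (∀ z : ℕ, tsec (ZMod u) ^ (c * v * z) ∈ H') → H' = ⊤) :
    ∀ A : SL(2, ZMod n),
      Matrix.SpecialLinearGroup.map (ZMod.castHom hdv (ZMod v)) A = 1 → A ∈ H := by
  set πu := Matrix.SpecialLinearGroup.map (n := Fin 2) (ZMod.castHom hdu (ZMod u)) with hπu
  set πv := Matrix.SpecialLinearGroup.map (n := Fin 2) (ZMod.castHom hdv (ZMod v)) with hπv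
  set G0 := H ⊓ πv.ker with hG0
  have hfam1 : ∀ x : ℕ, tg (ZMod u) ^ (a * v * x) ∈ Subgroup.map πu G0 := by
    intro x
    refine Subgroup.mem_map.mpr
      ⟨tg (ZMod n) ^ (a * (v * x)), Subgroup.mem_inf.mpr ⟨fa (v * x), ?_⟩, ?_⟩
    · refine MonoidHom.mem_ker.mpr ?_
      have h2 : πv (tg (ZMod n) ^ (a * (v * x))) = tg (ZMod v) ^ (a * (v * x)) := by
        rw [map_pow, hπv, map_tg]
      rw [h2]
      exact tg_pow_eq_one ⟨a * x, by ring⟩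
    · rw [map_pow, hπu, map_tg, ← mul_assoc]
  have hfam2 : ∀ y : ℕ, tg' (ZMod u) ^ (b * v * y) ∈ Subgroup.map πu G0 := by
    intro y
    refine Subgroup.mem_map.mpr
      ⟨tg' (ZMod n) ^ (b * (v * y)), Subgroup.mem_inf.mpr ⟨fb (v * y), ?_⟩, ?_⟩
    · refine MonoidHom.mem_ker.mpr ?_
      have h2 : πv (tg' (ZMod n) ^ (b * (v * y))) = tg' (ZMod v) ^ (b * (v * y)) := by
        rw [map_pow, hπv, map_tg']
      rw [h2]
      exact tg'_pow_eq_one ⟨b * y, by ring⟩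
    · rw [map_pow, hπu, map_tg', ← mul_assoc]
  have hfam3 : ∀ z : ℕ, tsec (ZMod u) ^ (c * v * z) ∈ Subgroup.map πu G0 := by
    intro z
    refine Subgroup.mem_map.mpr
      ⟨tsec (ZMod n) ^ (c * (v * z)), Subgroup.mem_inf.mpr ⟨fc (v * z), ?_⟩, ?_⟩
    · refine MonoidHom.mem_ker.mpr ?_
      have h2 : πv (tsec (ZMod n) ^ (c * (v * z))) = tsec (ZMod v) ^ (c * (v * z)) := by
        rw [map_pow, hπv, map_tsec]
      rw [h2]
      exact tsec_pow_eq_one ⟨c * z, by ring⟩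
    · rw [map_pow, hπu, map_tsec, ← mul_assoc]
  have htop := ihu _ hfam1 hfam2 hfam3
  intro A hA
  have hmem : πu A ∈ Subgroup.map πu G0 := htop ▸ Subgroup.mem_top _
  obtain ⟨B, hBG0, hBeq⟩ := Subgroup.mem_map.mp hmem
  obtain ⟨hBH, hBker⟩ := Subgroup.mem_inf.mp hBG0
  have hAB : A = B := by
    apply inj_SL hn cop (by omega) (by omega) hdu hdv
    · exact hBeq.symm
    · rw [hA, MonoidHom.mem_ker.mp hBker]
  exact hAB ▸ hBH

theorem main : ∀ n : ℕ, 0 < n → ∀ a b c : ℕ,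
    (∀ p : ℕ, p.Prime → p ∣ n →
      ¬(p ∣ a ∧ p ∣ b) ∧ ¬(p ∣ a ∧ p ∣ c) ∧ ¬(p ∣ b ∧ p ∣ c)) →
    ∀ H : Subgroup (SL(2, ZMod n)),
    (∀ x : ℕ, tg (ZMod n) ^ (a * x) ∈ H) →
    (∀ y : ℕ, tg' (ZMod n) ^ (b * y) ∈ H) →
    (∀ z : ℕ, tsec (ZMod n) ^ (c * z) ∈ H) → H = ⊤ := by
  intro n
  induction n using Nat.strong_induction_on with
  | _ n ih =>
  intro hn a b c hcond H fa fb fc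
  haveI : NeZero n := ⟨hn.ne'⟩
  by_cases h1 : n = 1
  · subst h1
    rw [eq_top_iff]
    intro x _
    have hx : x = 1 := by
      apply Subtype.ext
      ext i j
      exact Subsingleton.elim _ _
    rw [hx]
    exact one_mem H
  · obtain ⟨p, hp, hpn⟩ := Nat.exists_prime_and_dvd h1
    have hk : 0 < n.factorization p := hp.factorization_pos_of_dvd hn.ne' hpn
    obtain ⟨u, hu_def⟩ : ∃ u : ℕ, u = p ^ n.factorization p := ⟨_, rfl⟩
    obtain ⟨v, hv_def⟩ : ∃ v : ℕ, v = n / u := ⟨_, rfl⟩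
    have huv : u * v = n := by
      rw [hv_def, hu_def]
      exact Nat.ordProj_mul_ordCompl_eq_self n p
    have hcop : u.Coprime v := by
      rw [hv_def, hu_def]
      exact Nat.Coprime.pow_left _ (Nat.coprime_ordCompl hp hn.ne')
    have hu1 : 1 < u := by
      rw [hu_def]
      exact Nat.one_lt_pow hk.ne' hp.one_lt
    have hv0 : 0 < v := by
      rcases Nat.eq_zero_or_pos v with h | h
      · rw [h, mul_zero] at huv; omega
      · exact h
    by_cases hv1 : v = 1
    · have hnu : n = p ^ n.factorization p := by
        nth_rewrite 1 [← huv]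
        rw [hv1, mul_one]
        exact hu_def
      obtain ⟨c1, c2, c3⟩ := hcond p hp hpn
      exact pp_case hp hnu a b c c1 c2 c3 H fa fb fc
    · have hv1' : 1 < v := by omega
      have hul : u < n := by
        rw [← huv]
        exact (lt_mul_iff_one_lt_right (by omega : (0:ℕ) < u)).mpr hv1'
      have hvl : v < n := by
        rw [← huv]
        exact (lt_mul_iff_one_lt_left (by omega : (0:ℕ) < v)).mpr hu1
      have hdu : u ∣ n := ⟨v, huv.symm⟩
      have hdv : v ∣ n := ⟨u, by rw [← huv, mul_comm]⟩
      -- condition transfer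
      have hnot : ∀ w w' p' : ℕ, w.Coprime w' → p'.Prime → p' ∣ w → ¬ p' ∣ w' := by
        intro w w' p' hc hp' h1' h2'
        have hd : p' ∣ Nat.gcd w w' := Nat.dvd_gcd h1' h2'
        rw [Nat.Coprime] at hc
        rw [hc] at hd
        exact hp'.one_lt.ne' (Nat.dvd_one.mp hd)
      have red : ∀ w w' p' : ℕ, w.Coprime w' → p'.Prime → p' ∣ w →
          ∀ e : ℕ, p' ∣ e * w' ↔ p' ∣ e := by
        intro w w' p' hc hp' hpw e
        constructor
        · intro h
          rcases (Nat.Prime.dvd_mul hp').mp h with h' | h'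
          · exact h'
          · exact absurd h' (hnot w w' p' hc hp' hpw)
        · exact fun h => h.mul_right w'
      have condu : ∀ p' : ℕ, p'.Prime → p' ∣ u →
          ¬(p' ∣ a * v ∧ p' ∣ b * v) ∧ ¬(p' ∣ a * v ∧ p' ∣ c * v) ∧
            ¬(p' ∣ b * v ∧ p' ∣ c * v) := by
        intro p' hp' hpu
        obtain ⟨c1, c2, c3⟩ := hcond p' hp' (hpu.trans hdu)
        simp only [red u v p' hcop hp' hpu]
        exact ⟨c1, c2, c3⟩
      have condv : ∀ p' : ℕ, p'.Prime → p' ∣ v →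
          ¬(p' ∣ a * u ∧ p' ∣ b * u) ∧ ¬(p' ∣ a * u ∧ p' ∣ c * u) ∧
            ¬(p' ∣ b * u ∧ p' ∣ c * u) := by
        intro p' hp' hpv
        obtain ⟨c1, c2, c3⟩ := hcond p' hp' (hpv.trans hdv)
        simp only [red v u p' hcop.symm hp' hpv]
        exact ⟨c1, c2, c3⟩
      have ihu : ∀ H' : Subgroup (SL(2, ZMod u)),
          (∀ x : ℕ, tg (ZMod u) ^ (a * v * x) ∈ H') →
          (∀ y : ℕ, tg' (ZMod u) ^ (b * v * y) ∈ H') →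
          (∀ z : ℕ, tsec (ZMod u) ^ (c * v * z) ∈ H') → H' = ⊤ := by
        intro H' f1 f2 f3
        exact ih u hul (by omega) (a * v) (b * v) (c * v) condu H' f1 f2 f3
      have ihv : ∀ H' : Subgroup (SL(2, ZMod v)),
          (∀ x : ℕ, tg (ZMod v) ^ (a * u * x) ∈ H') →
          (∀ y : ℕ, tg' (ZMod v) ^ (b * u * y) ∈ H') →
          (∀ z : ℕ, tsec (ZMod v) ^ (c * u * z) ∈ H') → H' = ⊤ := by
        intro H' f1 f2 f3
        exact ih v hvl (by omega) (a * u) (b * u) (c * u) condv H' f1 f2 f3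
      have k1 := ker_le huv hcop hu1 hv1' hdu hdv a b c H fa fb fc ihu
      have k2 := ker_le (show v * u = n by rw [mul_comm]; exact huv) hcop.symm hv1' hu1
        hdv hdu a b c H fa fb fc ihv
      rw [eq_top_iff]
      intro A _
      obtain ⟨B, hB1, hB2⟩ := crt_lift huv hcop (by omega) (by omega) hdu hdv A
      have hBH : B ∈ H := k1 B hB2
      have hBA : B⁻¹ * A ∈ H := by
        apply k2
        rw [MonoidHom.map_mul, MonoidHom.map_inv, hB1, inv_mul_cancel]
      have hsplit : A = B * (B⁻¹ * A) := by group
      rw [hsplit]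
      exact mul_mem hBH hBA

end Main
end TNCAux
/-- The matrix `T = [[1,1],[0,1]]` in `SL(2,ℤ)`. -/
def Tmat : Matrix.SpecialLinearGroup (Fin 2) ℤ :=
  ⟨!![1, 1; 0, 1], by norm_num [Matrix.det_fin_two_of]⟩

/-- The matrix `T' = [[1,0],[1,1]]` in `SL(2,ℤ)`. -/
def Tmat' : Matrix.SpecialLinearGroup (Fin 2) ℤ :=
  ⟨!![1, 0; 1, 1], by norm_num [Matrix.det_fin_two_of]⟩

/-- **Proposition.** Let `q ≥ 1` and `L > 4q` with `gcd(L, 30q) = 1` and such that neither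
`3` nor `5` divides `L - 4q`. Any subgroup `Γ ≤ SL(2,ℤ)` containing `T^L`, `T'^15` and
`T''^{2(L-4q)}` (where `T'' = T'TT'⁻¹`) surjects onto `SL(2,ℤ/nℤ)` for every `n ≥ 1`,
i.e. `Γ` is a totally non congruence group. -/
theorem totally_noncongruence_of_three_parabolics (q L : ℕ) (hq : 1 ≤ q) (hL : 4 * q < L)
    (hgcd : Nat.gcd L (30 * q) = 1)
    (h3 : ¬ (3 ∣ (L - 4 * q))) (h5 : ¬ (5 ∣ (L - 4 * q)))
    (Γ : Subgroup (Matrix.SpecialLinearGroup (Fin 2) ℤ))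
    (hT : Tmat ^ L ∈ Γ) (hT' : Tmat' ^ 15 ∈ Γ)
    (hT'' : (Tmat' * Tmat * Tmat'⁻¹) ^ (2 * (L - 4 * q)) ∈ Γ) :
    ∀ n : ℕ, 1 ≤ n →
      Subgroup.map (Matrix.SpecialLinearGroup.map (Int.castRingHom (ZMod n))) Γ = ⊤ := by
  intro n hn1
  have hTmat : Tmat = TNCAux.tg ℤ := rfl
  have hTmat' : Tmat' = TNCAux.tg' ℤ := rfl
  have hTsec : Tmat' * Tmat * Tmat'⁻¹ = TNCAux.tsec ℤ := rfl
  set f := Matrix.SpecialLinearGroup.map (n := Fin 2) (Int.castRingHom (ZMod n)) with hf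
  set H := Subgroup.map f Γ with hH
  -- the families
  have fa : ∀ x : ℕ, TNCAux.tg (ZMod n) ^ (L * x) ∈ H := by
    intro x
    have h1 : (Tmat ^ L) ^ x ∈ Γ := pow_mem hT x
    have h2 : f ((Tmat ^ L) ^ x) ∈ H := Subgroup.mem_map_of_mem f h1
    have h3 : f ((Tmat ^ L) ^ x) = TNCAux.tg (ZMod n) ^ (L * x) := by
      rw [← pow_mul, map_pow, hTmat, hf, TNCAux.map_tg]
    rwa [h3] at h2
  have fb : ∀ y : ℕ, TNCAux.tg' (ZMod n) ^ (15 * y) ∈ H := by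
    intro y
    have h1 : (Tmat' ^ 15) ^ y ∈ Γ := pow_mem hT' y
    have h2 : f ((Tmat' ^ 15) ^ y) ∈ H := Subgroup.mem_map_of_mem f h1
    have h3 : f ((Tmat' ^ 15) ^ y) = TNCAux.tg' (ZMod n) ^ (15 * y) := by
      rw [← pow_mul, map_pow, hTmat', hf, TNCAux.map_tg']
    rwa [h3] at h2
  have fc : ∀ z : ℕ, TNCAux.tsec (ZMod n) ^ ((2 * (L - 4 * q)) * z) ∈ H := by
    intro z
    have h1 : ((Tmat' * Tmat * Tmat'⁻¹) ^ (2 * (L - 4 * q))) ^ z ∈ Γ := pow_mem hT'' z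
    have h2 := Subgroup.mem_map_of_mem f h1
    have h3 : f (((Tmat' * Tmat * Tmat'⁻¹) ^ (2 * (L - 4 * q))) ^ z) =
        TNCAux.tsec (ZMod n) ^ ((2 * (L - 4 * q)) * z) := by
      rw [← pow_mul, map_pow, hTsec, hf, TNCAux.map_tsec]
    rwa [h3] at h2
  -- the arithmetic conditions
  have hgL : ∀ p : ℕ, p.Prime → p ∣ L → p ∣ 30 * q → False := by
    intro p hp hpL hpq
    have : p ∣ Nat.gcd L (30 * q) := Nat.dvd_gcd hpL hpq
    rw [hgcd] at this
    exact hp.one_lt.ne' (Nat.dvd_one.mp this)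
  have hcond : ∀ p : ℕ, p.Prime → p ∣ n →
      ¬(p ∣ L ∧ p ∣ 15) ∧ ¬(p ∣ L ∧ p ∣ (2 * (L - 4 * q))) ∧
        ¬(p ∣ 15 ∧ p ∣ (2 * (L - 4 * q))) := by
    intro p hp _
    refine ⟨?_, ?_, ?_⟩
    · rintro ⟨h1, h2⟩
      exact hgL p hp h1 (h2.trans ⟨2 * q, by ring⟩)
    · rintro ⟨h1, h2⟩
      rcases hp.dvd_mul.mp h2 with h | h
      · exact hgL p hp h1 (h.trans ⟨15 * q, by ring⟩)
      · have h4 : p ∣ L - (L - 4 * q) := Nat.dvd_sub h1 h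
        rw [Nat.sub_sub_self (le_of_lt hL)] at h4
        have h5 : p ∣ 4 * q := h4
        rcases hp.dvd_mul.mp h5 with h6 | h6
        · have h7 : p ∣ 2 := by
            rcases hp.dvd_mul.mp (show p ∣ 2 * 2 from by norm_num at h6 ⊢; exact h6) with h | h
            · exact h
            · exact h
          exact hgL p hp h1 (h7.trans ⟨15 * q, by ring⟩)
        · exact hgL p hp h1 (h6.trans ⟨30, by ring⟩)
    · rintro ⟨h1, h2⟩
      have hp35 : p = 3 ∨ p = 5 := by
        rcases hp.dvd_mul.mp (show p ∣ 3 * 5 from by norm_num at h1 ⊢; exact h1) with h | h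
        · exact Or.inl ((Nat.prime_dvd_prime_iff_eq hp (by norm_num)).mp h)
        · exact Or.inr ((Nat.prime_dvd_prime_iff_eq hp (by norm_num)).mp h)
      rcases hp.dvd_mul.mp h2 with h | h
      · have := Nat.le_of_dvd (by norm_num) h
        omega
      · rcases hp35 with rfl | rfl
        · exact h3 h
        · exact h5 h
  exact TNCAux.main n (by omega) L 15 (2 * (L - 4 * q)) hcond H fa fb fc
end

section
/- For every natural number q ≥ 1, the set of primes L satisfying L > 4q, gcd(L, 30q) = 1, 3 ∤ (L − 4q), and 5 ∤ (L − 4q) is infinite. -/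
private lemma dvd_ordCompl_aux {p n d : ℕ} (hcop : Nat.Coprime d p) (hd : d ∣ n) :
    d ∣ ordCompl[p] n := by
  have h := Nat.ordProj_mul_ordCompl_eq_self n p
  have : d ∣ ordProj[p] n * ordCompl[p] n := by rw [h]; exact hd
  exact (Nat.Coprime.pow_right _ hcop).dvd_of_dvd_mul_left this

/-- For every `q ≥ 1`, there are infinitely many primes `L` with `L > 4q`,
`gcd(L, 30q) = 1`, `3 ∤ (L - 4q)` and `5 ∤ (L - 4q)`. -/
theorem infinitely_many_admissible_primes (q : ℕ) (hq : 1 ≤ q) :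
    {L : ℕ | Nat.Prime L ∧ 4 * q < L ∧ Nat.gcd L (30 * q) = 1 ∧
      ¬ (3 ∣ (L - 4 * q)) ∧ ¬ (5 ∣ (L - 4 * q))}.Infinite := by
  have p3 : Nat.Prime 3 := by norm_num
  have p5 : Nat.Prime 5 := by norm_num
  set r3 : ℕ := if q % 3 = 1 then 2 else 1 with hr3
  set r5 : ℕ := if q % 5 = 4 then 2 else 1 with hr5
  set C : ℕ := ordCompl[5] (2 * q) with hC
  have hCne : C ≠ 0 := (Nat.ordCompl_pos 5 (by omega)).ne'
  set m : ℕ := ordCompl[3] C with hmdef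
  have hmpos : 0 < m := Nat.ordCompl_pos 3 hCne
  have hm3 : ¬ 3 ∣ m := Nat.not_dvd_ordCompl p3 hCne
  have hm5 : ¬ 5 ∣ m := fun h => Nat.not_dvd_ordCompl p5 (by omega) (h.trans (Nat.ordCompl_dvd C 3))
  have h2m : 2 ∣ m := by
    apply dvd_ordCompl_aux (by norm_num)
    exact dvd_ordCompl_aux (by norm_num) ⟨q, rfl⟩
  have h15m : Nat.Coprime 15 m := by
    have : (15 : ℕ) = 3 * 5 := by norm_num
    rw [this, Nat.coprime_mul_iff_left]
    exact ⟨(Nat.Prime.coprime_iff_not_dvd p3).mpr hm3, (Nat.Prime.coprime_iff_not_dvd p5).mpr hm5⟩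
  obtain ⟨c, hc3, hc5⟩ := Nat.chineseRemainder (show Nat.Coprime 3 5 by decide) r3 r5
  obtain ⟨a, ha15, ham⟩ := Nat.chineseRemainder h15m c 1
  have ha3 : a % 3 = r3 % 3 := ((ha15.of_dvd (by norm_num)).trans hc3)
  have ha5 : a % 5 = r5 % 5 := ((ha15.of_dvd (by norm_num)).trans hc5)
  have hacop : Nat.Coprime a (15 * m) := by
    rw [Nat.coprime_mul_iff_right]
    constructor
    · have : (15 : ℕ) = 3 * 5 := by norm_num
      rw [this, Nat.coprime_mul_iff_right]
      constructor
      · rw [Nat.coprime_comm, Nat.Prime.coprime_iff_not_dvd p3]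
        intro h
        simp only [hr3] at ha3
        split_ifs at ha3 <;> omega
      · rw [Nat.coprime_comm, Nat.Prime.coprime_iff_not_dvd p5]
        intro h
        simp only [hr5] at ha5
        split_ifs at ha5 <;> omega
    · have : a % m = 1 % m := ham
      rw [Nat.Coprime, Nat.gcd_comm, Nat.gcd_rec, this, ← Nat.gcd_rec, Nat.gcd_one_right]
  haveI : NeZero (15 * m) := ⟨by positivity⟩
  have hUnit : IsUnit ((a : ZMod (15 * m))) := (ZMod.isUnit_iff_coprime a (15 * m)).mpr hacop
  have hInf := Nat.infinite_setOfPred_prime_and_eq_mod hUnit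
  apply Set.Infinite.mono _ (hInf.diff (Set.finite_Iic (4 * q)))
  rintro L ⟨⟨hLp, hLmod⟩, hLgt⟩
  simp only [Set.mem_Iic, not_le] at hLgt
  have hLmodE : L ≡ a [MOD 15 * m] := (ZMod.natCast_eq_natCast_iff _ _ _).mp hLmod
  have hL3 : L % 3 = r3 % 3 := (hLmodE.of_dvd ⟨5 * m, by ring⟩).trans ha3
  have hL5 : L % 5 = r5 % 5 := (hLmodE.of_dvd ⟨3 * m, by ring⟩).trans ha5
  have hLcop : Nat.Coprime L (15 * m) := (ZMod.isUnit_iff_coprime L (15 * m)).mp (hLmod ▸ hUnit)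
  have hnd : ∀ d : ℕ, d ∣ 15 * m → L ∣ d → False := by
    intro d hd hLd
    have h1 : L = 1 := Nat.Coprime.eq_one_of_dvd hLcop (hLd.trans hd)
    exact absurd h1 hLp.one_lt.ne'
  have hgcd : Nat.gcd L (30 * q) = 1 := by
    have : Nat.Coprime L (30 * q) := by
      rw [Nat.Prime.coprime_iff_not_dvd hLp]
      intro hdvd
      have h30 : (30 : ℕ) * q = 2 * (3 * (5 * q)) := by ring
      rw [h30] at hdvd
      rcases (Nat.Prime.dvd_mul hLp).mp hdvd with h | h
      · exact hnd 2 (Dvd.dvd.mul_left h2m 15) h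
      rcases (Nat.Prime.dvd_mul hLp).mp h with h | h
      · exact hnd 3 ⟨5 * m, by ring⟩ h
      rcases (Nat.Prime.dvd_mul hLp).mp h with h | h
      · exact hnd 5 ⟨3 * m, by ring⟩ h
      · have := Nat.le_of_dvd (by omega) h
        omega
    exact this
  refine ⟨hLp, hLgt, hgcd, ?_, ?_⟩
  · intro h3
    have : 4 * q ≡ L [MOD 3] := (Nat.modEq_iff_dvd' (by omega)).mpr h3
    have h4 : (4 * q) % 3 = L % 3 := this
    simp only [hr3] at hL3
    split_ifs at hL3 <;> omega
  · intro h5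
    have : 4 * q ≡ L [MOD 5] := (Nat.modEq_iff_dvd' (by omega)).mpr h5
    have h4 : (4 * q) % 5 = L % 5 := this
    simp only [hr5] at hL5
    split_ifs at hL5 <;> omega
end
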